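/- Let Λ be a self-adjoint operator on a real Hilbert space with spectrum in [−1,1], V a vector, μ_V its spectral measure, and ψ_ε = (1 + ε − Λ)^{−1}V for ε > 0. If ∫_{[−1,1]}(1−λ)^{−1}dμ_V(λ) < ∞, then lim_{ε₁, ε₂ ↓ 0} ⟨ψ_{ε₁} − ψ_{ε₂}, (1 − Λ)(ψ_{ε₁} − ψ_{ε₂})⟩ = 0. -/

import Mathlib

set_option maxHeartbeats 1000000
set_option synthInstance.maxHeartbeats 400000

open MeasureTheory Filter
open scoped RealInnerProductSpace Topology

open Polynomial in
/-- Partial sums of the geometric (Neumann) series for `(1+ε-x)⁻¹`. -/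
noncomputable def rddfGeomPoly (ε : ℝ) (n : ℕ) : Polynomial ℝ :=
  ∑ k ∈ Finset.range n, C ((1+ε)⁻¹^(k+1)) * X^k

open Polynomial in
lemma rddfGeomPoly_id (ε : ℝ) (hε : 0 < ε) (n : ℕ) :
    (C (1+ε) - X) * rddfGeomPoly ε n = 1 - C ((1+ε)⁻¹^n) * X^n := by
  have h1 : (1:ℝ)+ε ≠ 0 := by positivity
  unfold rddfGeomPoly
  rw [Finset.mul_sum]
  have hterm : ∀ k ∈ Finset.range n, (C (1+ε) - X) * (C ((1+ε)⁻¹^(k+1)) * X^k)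
      = (C ((1+ε)⁻¹^k) * X^k - C ((1+ε)⁻¹^(k+1)) * X^(k+1)) := by
    intro k _
    have hc : (1+ε) * (1+ε)⁻¹^(k+1) = (1+ε)⁻¹^k := by
      rw [pow_succ', ← mul_assoc, mul_inv_cancel₀ h1, one_mul]
    calc (C (1+ε) - X) * (C ((1+ε)⁻¹^(k+1)) * X^k)
        = C ((1+ε) * (1+ε)⁻¹^(k+1)) * X^k - C ((1+ε)⁻¹^(k+1)) * X^(k+1) := by
          rw [C_mul]; ring
      _ = _ := by rw [hc]
  rw [Finset.sum_congr rfl hterm,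
    Finset.sum_range_sub' (fun k => C ((1+ε)⁻¹^k) * X^k) n]
  simp

open Polynomial in
lemma rddfGeomPoly_eval_bound (ε : ℝ) (hε : 0 < ε) (n : ℕ) (x : ℝ) (hx : |x| ≤ 1) :
    |(rddfGeomPoly ε n).eval x| ≤ ε⁻¹ := by
  have h0 : (0:ℝ) < 1 + ε := by linarith
  have hc0 : (0:ℝ) ≤ (1+ε)⁻¹ := by positivity
  have hc1 : (1+ε)⁻¹ < 1 := by
    have h2 : (1+ε) * (1+ε)⁻¹ = 1 := mul_inv_cancel₀ (ne_of_gt h0)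
    nlinarith [inv_pos.mpr h0]
  have he : (rddfGeomPoly ε n).eval x = ∑ k ∈ Finset.range n, (1+ε)⁻¹^(k+1) * x^k := by
    simp [rddfGeomPoly, eval_finset_sum]
  rw [he]
  calc |∑ k ∈ Finset.range n, (1+ε)⁻¹^(k+1) * x^k|
      ≤ ∑ k ∈ Finset.range n, |(1+ε)⁻¹^(k+1) * x^k| := Finset.abs_sum_le_sum_abs _ _
    _ ≤ ∑ k ∈ Finset.range n, (1+ε)⁻¹^(k+1) := by
        apply Finset.sum_le_sum
        intro k _
        rw [abs_mul, abs_pow, abs_pow, abs_of_nonneg hc0]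
        calc (1+ε)⁻¹^(k+1) * |x|^k ≤ (1+ε)⁻¹^(k+1) * 1 := by
              exact mul_le_mul_of_nonneg_left (pow_le_one₀ (abs_nonneg x) hx) (by positivity)
          _ = (1+ε)⁻¹^(k+1) := mul_one _
    _ = (∑ k ∈ Finset.range n, (1+ε)⁻¹^k) * (1+ε)⁻¹ := by
        simp_rw [pow_succ]; rw [← Finset.sum_mul]
    _ ≤ (1 - (1+ε)⁻¹)⁻¹ * (1+ε)⁻¹ := by
        apply mul_le_mul_of_nonneg_right _ hc0
        calc (∑ k ∈ Finset.range n, (1+ε)⁻¹^k)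
            ≤ ∑' k : ℕ, (1+ε)⁻¹^k :=
              Summable.sum_le_tsum _ (fun i _ => by positivity) (summable_geometric_of_lt_one hc0 hc1)
          _ = (1 - (1+ε)⁻¹)⁻¹ := tsum_geometric_of_lt_one hc0 hc1
    _ = ε⁻¹ := by
        have h2 : (1 - (1+ε)⁻¹) = ε * (1+ε)⁻¹ := by field_simp; ring
        rw [h2, mul_inv, inv_inv, mul_assoc, mul_inv_cancel₀ (ne_of_gt h0), mul_one]

open Polynomial in
lemma rddfGeomPoly_eval_tendsto (ε : ℝ) (hε : 0 < ε) (x : ℝ) (hx : |x| ≤ 1) :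
    Tendsto (fun n => (rddfGeomPoly ε n).eval x) atTop (𝓝 (1+ε-x)⁻¹) := by
  have h0 : (0:ℝ) < 1 + ε := by linarith
  have hxle : x ≤ 1 := (abs_le.mp hx).2
  have hd : (0:ℝ) < 1+ε-x := by linarith
  have hev : ∀ n, (1+ε-x) * (rddfGeomPoly ε n).eval x = 1 - ((1+ε)⁻¹*x)^n := by
    intro n
    have h := congrArg (eval x) (rddfGeomPoly_id ε hε n)
    simpa [mul_pow] using h
  have hxn : Tendsto (fun n => ((1+ε)⁻¹*x)^n) atTop (𝓝 0) := by
    apply tendsto_pow_atTop_nhds_zero_of_abs_lt_one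
    rw [abs_mul, abs_inv, abs_of_pos h0]
    have hi : (0:ℝ) < (1+ε)⁻¹ := by positivity
    have hc1 : (1+ε)⁻¹ < 1 := by
      have h2 : (1+ε) * (1+ε)⁻¹ = 1 := mul_inv_cancel₀ (ne_of_gt h0)
      nlinarith
    calc (1+ε)⁻¹ * |x| ≤ (1+ε)⁻¹ * 1 := mul_le_mul_of_nonneg_left hx (le_of_lt hi)
      _ = (1+ε)⁻¹ := mul_one _
      _ < 1 := hc1
  have hlim : Tendsto (fun n => (1 - ((1+ε)⁻¹*x)^n) * (1+ε-x)⁻¹) atTop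
      (𝓝 ((1-0) * (1+ε-x)⁻¹)) := (tendsto_const_nhds.sub hxn).mul tendsto_const_nhds
  rw [show ((1:ℝ)-0) * (1+ε-x)⁻¹ = (1+ε-x)⁻¹ by ring] at hlim
  apply hlim.congr
  intro n
  rw [← hev n, mul_comm (1+ε-x) _, mul_assoc, mul_inv_cancel₀ (ne_of_gt hd), mul_one]

lemma rddf_aeval_isSelfAdjoint {H : Type*} [NormedAddCommGroup H] [InnerProductSpace ℝ H]
    [CompleteSpace H] {Λ : H →L[ℝ] H} (hΛ : IsSelfAdjoint Λ) (p : Polynomial ℝ) :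
    IsSelfAdjoint (Polynomial.aeval Λ p) := by
  induction p using Polynomial.induction_on' with
  | add p q hp hq => rw [map_add]; exact hp.add hq
  | monomial n c =>
    rw [Polynomial.aeval_monomial, ← Algebra.smul_def]
    exact (show IsSelfAdjoint c from star_trivial c).smul (hΛ.pow n)

lemma rddf_F_le_inv {x a b : ℝ} (hx : x < 1) (ha : 0 < a) (hb : 0 < b) :
    (1-x) * ((1+a-x)⁻¹ - (1+b-x)⁻¹)^2 ≤ (1-x)⁻¹ := by
  have ht : (0:ℝ) < 1 - x := by linarith
  set t : ℝ := 1 - x with htdef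
  have e1 : 1+a-x = t+a := by rw [htdef]; ring
  have e2 : 1+b-x = t+b := by rw [htdef]; ring
  rw [e1, e2]
  have hta : (0:ℝ) < t + a := by linarith
  have htb : (0:ℝ) < t + b := by linarith
  have h2 : (t+a)⁻¹ - (t+b)⁻¹ = (b-a)/((t+a)*(t+b)) := by
    field_simp; ring
  rw [h2, div_pow, ← mul_div_assoc]
  rw [div_le_iff₀ (by positivity)]
  have key : t * (b-a)^2 * t ≤ ((t+a)*(t+b))^2 := by
    have hA : (0:ℝ) < t^2 + 2*t*a + a*b := by positivity
    have hB : (0:ℝ) < t^2 + 2*t*b + a*b := by positivity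
    nlinarith [mul_pos hA hB]
  calc t * (b-a)^2 = (t * (b-a)^2 * t) * t⁻¹ := by
        rw [mul_assoc, mul_inv_cancel₀ (ne_of_gt ht), mul_one]
    _ ≤ ((t+a)*(t+b))^2 * t⁻¹ := by
        apply mul_le_mul_of_nonneg_right key (by positivity)
    _ = t⁻¹ * ((t+a)*(t+b))^2 := by ring

/-- Cauchy property of the resolvent approximations in the `(1-Λ)`-form:
if the spectral measure `μ` of `Λ` at `V` satisfies `∫ (1-λ)⁻¹ dμ < ∞` then
`⟨ψ_{ε₁} - ψ_{ε₂}, (1-Λ)(ψ_{ε₁} - ψ_{ε₂})⟩ → 0` as `ε₁, ε₂ ↓ 0`. -/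
theorem resolvent_diff_dirichlet_form_tendsto_zero
    {H : Type*} [NormedAddCommGroup H] [InnerProductSpace ℝ H] [CompleteSpace H]
    (Λ : H →L[ℝ] H) (hΛ : IsSelfAdjoint Λ)
    (hspec : spectrum ℝ Λ ⊆ Set.Icc (-1 : ℝ) 1)
    (V : H) (μ : Measure ℝ) [IsFiniteMeasure μ]
    (hsupp : μ (Set.Icc (-1 : ℝ) 1)ᶜ = 0)
    (hμ : ∀ p : Polynomial ℝ,
      ⟪V, Polynomial.aeval Λ p V⟫ = ∫ x, p.eval x ∂μ)
    (ψ : ℝ → H)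
    (hψ : ∀ ε > (0 : ℝ), ((1 + ε) • (1 : H →L[ℝ] H) - Λ) (ψ ε) = V)
    (hfin : ∫⁻ l, (ENNReal.ofReal (1 - l))⁻¹ ∂μ < ⊤) :
    Tendsto (fun p : ℝ × ℝ => ⟪ψ p.1 - ψ p.2, ((1 : H →L[ℝ] H) - Λ) (ψ p.1 - ψ p.2)⟫)
      ((𝓝[>] 0) ×ˢ (𝓝[>] 0)) (𝓝 0) := by
  classical
  -- almost everywhere facts
  have haeIcc : ∀ᵐ x ∂μ, x ∈ Set.Icc (-1:ℝ) 1 := by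
    rw [ae_iff]
    simpa [Set.compl_def] using hsupp
  have hμ1 : μ {(1:ℝ)} = 0 := by
    by_contra h
    have hle : ∫⁻ x in {(1:ℝ)}, (ENNReal.ofReal (1 - x))⁻¹ ∂μ
        ≤ ∫⁻ x, (ENNReal.ofReal (1-x))⁻¹ ∂μ := setLIntegral_le_lintegral _ _
    rw [lintegral_singleton] at hle
    have htop : ((ENNReal.ofReal ((1:ℝ)-1))⁻¹ * μ {(1:ℝ)}) = ⊤ := by
      rw [show (1:ℝ)-1 = 0 by ring, ENNReal.ofReal_zero, ENNReal.inv_zero, ENNReal.top_mul h]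
    rw [htop] at hle
    exact absurd (top_le_iff.mp hle) hfin.ne
  have hae1 : ∀ᵐ x ∂μ, x ≠ (1:ℝ) := by
    rw [ae_iff]
    convert hμ1 using 2
    ext x
    simp
  -- the spectral-integral identity for fixed ε₁, ε₂
  have key : ∀ ε₁ ε₂ : ℝ, 0 < ε₁ → 0 < ε₂ →
      ⟪ψ ε₁ - ψ ε₂, ((1 : H →L[ℝ] H) - Λ) (ψ ε₁ - ψ ε₂)⟫
        = ∫ x, (1-x) * ((1+ε₁-x)⁻¹ - (1+ε₂-x)⁻¹)^2 ∂μ := by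
    intro ε₁ ε₂ hε₁ hε₂
    have hmove : ∀ (T : H →L[ℝ] H), IsSelfAdjoint T → ∀ x y : H, ⟪x, T y⟫ = ⟪T x, y⟫ := by
      intro T hT x y
      conv_lhs => rw [← ContinuousLinearMap.isSelfAdjoint_iff'.mp hT]
      rw [ContinuousLinearMap.adjoint_inner_right]
    have hA : ∀ ε : ℝ, 0 < ε → IsUnit ((1+ε) • (1 : H →L[ℝ] H) - Λ) := by
      intro ε hε
      have hmem : (1+ε) ∉ spectrum ℝ Λ := by
        intro hmem
        have := hspec hmem
        rw [Set.mem_Icc] at this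
        linarith [this.2]
      have := spectrum.notMem_iff.mp hmem
      rwa [Algebra.algebraMap_eq_smul_one] at this
    -- resolvent vectors
    have hψR : ∀ ε : ℝ, 0 < ε →
        ψ ε = Ring.inverse ((1+ε) • (1 : H →L[ℝ] H) - Λ) V := by
      intro ε hε
      have h := hψ ε hε
      have h3 : Ring.inverse ((1+ε) • (1 : H →L[ℝ] H) - Λ)
          (((1+ε) • (1 : H →L[ℝ] H) - Λ) (ψ ε)) = ψ ε := by
        rw [← ContinuousLinearMap.mul_apply, Ring.inverse_mul_cancel _ (hA ε hε),
          ContinuousLinearMap.one_apply]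
      rw [← h3, h]
    -- bound on ‖Λ^n V‖
    set M : ℝ := Real.sqrt (μ Set.univ).toReal with hMdef
    have hM : ∀ n : ℕ, ‖(Λ^n) V‖ ≤ M := by
      intro n
      have hint : Integrable (fun x : ℝ => x^(2*n)) μ := by
        apply Integrable.mono' (integrable_const (1:ℝ))
          ((continuous_pow (2*n)).aestronglyMeasurable)
        filter_upwards [haeIcc] with x hx
        rw [Real.norm_eq_abs, abs_pow]
        exact pow_le_one₀ (abs_nonneg x) (abs_le.mpr ⟨hx.1, hx.2⟩)
      have h1 : ‖(Λ^n) V‖^2 = ⟪V, (Λ^(2*n)) V⟫ := by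
        rw [show (Λ^(2*n) : H →L[ℝ] H) = Λ^n * Λ^n from by rw [← pow_add, two_mul]]
        rw [ContinuousLinearMap.mul_apply, hmove (Λ^n) (hΛ.pow n) V ((Λ^n) V),
          real_inner_self_eq_norm_sq]
      have h2 : ⟪V, (Λ^(2*n)) V⟫ = ∫ x, x^(2*n) ∂μ := by
        have h := hμ (Polynomial.X^(2*n))
        simp only [map_pow, Polynomial.aeval_X, Polynomial.eval_pow,
          Polynomial.eval_X] at h
        exact h
      have h3 : ‖(Λ^n) V‖^2 ≤ (μ Set.univ).toReal := by
        rw [h1, h2]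
        calc ∫ x, x^(2*n) ∂μ ≤ ∫ _, (1:ℝ) ∂μ := by
              apply integral_mono_ae hint (integrable_const 1)
              filter_upwards [haeIcc] with x hx
              have hax : |x| ≤ 1 := abs_le.mpr ⟨hx.1, hx.2⟩
              calc x^(2*n) ≤ |x^(2*n)| := le_abs_self _
                _ = |x|^(2*n) := abs_pow x (2*n)
                _ ≤ 1 := pow_le_one₀ (abs_nonneg x) hax
          _ = (μ Set.univ).toReal := by simp [Measure.real]
      rw [hMdef]
      rw [show ‖(Λ^n) V‖ = Real.sqrt (‖(Λ^n) V‖^2) from (Real.sqrt_sq (norm_nonneg _)).symm]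
      exact Real.sqrt_le_sqrt h3
    -- the polynomial approximations applied to V
    have happ : ∀ (ε : ℝ), 0 < ε → ∀ n : ℕ,
        (Polynomial.aeval Λ (rddfGeomPoly ε n)) V
          = Ring.inverse ((1+ε) • (1 : H →L[ℝ] H) - Λ) V
            - (1+ε)⁻¹^n • (Ring.inverse ((1+ε) • (1 : H →L[ℝ] H) - Λ)) ((Λ^n) V) := by
      intro ε hε n
      set Aε : H →L[ℝ] H := (1+ε) • (1 : H →L[ℝ] H) - Λ with hAdef
      have hu : IsUnit Aε := hA ε hε
      have h1 : Aε * (Polynomial.aeval Λ (rddfGeomPoly ε n)) = 1 - (1+ε)⁻¹^n • Λ^n := by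
        have h := congrArg (Polynomial.aeval Λ) (rddfGeomPoly_id ε hε n)
        simp only [map_mul, map_sub, map_one, Polynomial.aeval_C, Polynomial.aeval_X,
          Polynomial.aeval_X_pow, Algebra.algebraMap_eq_smul_one, smul_mul_assoc,
          one_mul] at h
        exact h
      have h2 : Polynomial.aeval Λ (rddfGeomPoly ε n)
          = Ring.inverse Aε - (1+ε)⁻¹^n • (Ring.inverse Aε * Λ^n) := by
        rw [← one_mul (Polynomial.aeval Λ (rddfGeomPoly ε n)),
          ← Ring.inverse_mul_cancel Aε hu, mul_assoc, h1, mul_sub, mul_one, mul_smul_comm]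
      rw [h2]
      simp [ContinuousLinearMap.sub_apply, ContinuousLinearMap.smul_apply,
        ContinuousLinearMap.mul_apply]
    -- the approximating vectors
    set g : ℕ → Polynomial ℝ := fun n => rddfGeomPoly ε₁ n - rddfGeomPoly ε₂ n with hgdef
    set w : ℕ → H := fun n => (Polynomial.aeval Λ (g n)) V with hwdef
    set R₁ : H →L[ℝ] H := Ring.inverse ((1+ε₁) • (1 : H →L[ℝ] H) - Λ) with hR₁def
    set R₂ : H →L[ℝ] H := Ring.inverse ((1+ε₂) • (1 : H →L[ℝ] H) - Λ) with hR₂def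
    have hwD : Tendsto w atTop (𝓝 (ψ ε₁ - ψ ε₂)) := by
      rw [tendsto_iff_norm_sub_tendsto_zero]
      apply squeeze_zero_norm
        (a := fun n => (1+ε₂)⁻¹^n * (‖R₂‖ * M) + (1+ε₁)⁻¹^n * (‖R₁‖ * M))
      · intro n
        have e : w n - (ψ ε₁ - ψ ε₂)
            = (1+ε₂)⁻¹^n • R₂ ((Λ^n) V) - (1+ε₁)⁻¹^n • R₁ ((Λ^n) V) := by
          simp only [hwdef, hgdef, map_sub, ContinuousLinearMap.sub_apply]
          rw [happ ε₁ hε₁ n, happ ε₂ hε₂ n, hψR ε₁ hε₁, hψR ε₂ hε₂, ← hR₁def, ← hR₂def]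
          abel
        simp only [norm_norm]
        rw [e]
        have hb : ∀ (R : H →L[ℝ] H) (c : ℝ), 0 ≤ c → ‖c • R ((Λ^n) V)‖ ≤ c * (‖R‖ * M) := by
          intro R c hc
          rw [norm_smul, Real.norm_eq_abs, abs_of_nonneg hc]
          apply mul_le_mul_of_nonneg_left _ hc
          exact (R.le_opNorm _).trans (mul_le_mul_of_nonneg_left (hM n) (norm_nonneg R))
        calc ‖(1+ε₂)⁻¹^n • R₂ ((Λ^n) V) - (1+ε₁)⁻¹^n • R₁ ((Λ^n) V)‖
            ≤ ‖(1+ε₂)⁻¹^n • R₂ ((Λ^n) V)‖ + ‖(1+ε₁)⁻¹^n • R₁ ((Λ^n) V)‖ := norm_sub_le _ _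
          _ ≤ (1+ε₂)⁻¹^n * (‖R₂‖ * M) + (1+ε₁)⁻¹^n * (‖R₁‖ * M) := by
              exact add_le_add (hb R₂ _ (by positivity)) (hb R₁ _ (by positivity))
      · have hgeo : ∀ ε : ℝ, 0 < ε → Tendsto (fun n : ℕ => (1+ε)⁻¹^n) atTop (𝓝 0) := by
          intro ε hε
          apply tendsto_pow_atTop_nhds_zero_of_lt_one (by positivity)
          have h0 : (0:ℝ) < 1+ε := by linarith
          have h2 : (1+ε) * (1+ε)⁻¹ = 1 := mul_inv_cancel₀ (ne_of_gt h0)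
          nlinarith [inv_pos.mpr h0]
        have := ((hgeo ε₂ hε₂).mul_const (‖R₂‖ * M)).add ((hgeo ε₁ hε₁).mul_const (‖R₁‖ * M))
        simpa using this
    have hcont : Tendsto (fun n => ⟪w n, ((1 : H →L[ℝ] H) - Λ) (w n)⟫) atTop
        (𝓝 ⟪ψ ε₁ - ψ ε₂, ((1 : H →L[ℝ] H) - Λ) (ψ ε₁ - ψ ε₂)⟫) :=
      hwD.inner ((((1 : H →L[ℝ] H) - Λ).continuous.tendsto _).comp hwD)
    have hform : ∀ n, ⟪w n, ((1 : H →L[ℝ] H) - Λ) (w n)⟫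
        = ∫ x, (g n).eval x * ((1-x) * (g n).eval x) ∂μ := by
      intro n
      have e1 : ((1 : H →L[ℝ] H) - Λ) (w n)
          = (Polynomial.aeval Λ ((1 - Polynomial.X) * g n)) V := by
        simp only [hwdef, map_mul, map_sub, map_one, Polynomial.aeval_X,
          ContinuousLinearMap.mul_apply, ContinuousLinearMap.sub_apply,
          ContinuousLinearMap.one_apply]
      have e2 : ⟪w n, ((1 : H →L[ℝ] H) - Λ) (w n)⟫
          = ⟪V, (Polynomial.aeval Λ (g n * ((1 - Polynomial.X) * g n))) V⟫ := by
        rw [e1]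
        simp only [hwdef]
        rw [← hmove _ (rddf_aeval_isSelfAdjoint hΛ (g n)) V _]
        rw [← ContinuousLinearMap.mul_apply, ← map_mul]
      rw [e2, hμ]
      simp only [Polynomial.eval_mul, Polynomial.eval_sub, Polynomial.eval_one,
        Polynomial.eval_X]
    have hDCT : Tendsto (fun n => ∫ x, (g n).eval x * ((1-x) * (g n).eval x) ∂μ) atTop
        (𝓝 (∫ x, (1-x) * ((1+ε₁-x)⁻¹ - (1+ε₂-x)⁻¹)^2 ∂μ)) := by
      apply tendsto_integral_of_dominated_convergence
        (bound := fun _ => (ε₁⁻¹+ε₂⁻¹) * (2 * (ε₁⁻¹+ε₂⁻¹)))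
      · intro n
        exact (((g n).continuous).mul
          ((continuous_const.sub continuous_id).mul ((g n).continuous))).aestronglyMeasurable
      · exact integrable_const _
      · intro n
        filter_upwards [haeIcc] with x hx
        have hx1 : |x| ≤ 1 := abs_le.mpr ⟨hx.1, hx.2⟩
        have h1 : |(g n).eval x| ≤ ε₁⁻¹ + ε₂⁻¹ := by
          rw [hgdef]
          simp only [Polynomial.eval_sub]
          rw [sub_eq_add_neg]
          refine (abs_add_le _ _).trans ?_
          rw [abs_neg]
          exact add_le_add (rddfGeomPoly_eval_bound ε₁ hε₁ n x hx1)
            (rddfGeomPoly_eval_bound ε₂ hε₂ n x hx1)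
        have hx2 : |1-x| ≤ 2 := abs_le.mpr ⟨by linarith [hx.1, hx.2], by linarith [hx.1, hx.2]⟩
        rw [Real.norm_eq_abs, abs_mul, abs_mul]
        apply mul_le_mul h1 (mul_le_mul hx2 h1 (abs_nonneg _) (by norm_num))
          (mul_nonneg (abs_nonneg _) (abs_nonneg _)) (by positivity)
      · filter_upwards [haeIcc] with x hx
        have hx1 : |x| ≤ 1 := abs_le.mpr ⟨hx.1, hx.2⟩
        have hg : Tendsto (fun n => (g n).eval x) atTop
            (𝓝 ((1+ε₁-x)⁻¹ - (1+ε₂-x)⁻¹)) := by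
          rw [hgdef]
          simp only [Polynomial.eval_sub]
          exact (rddfGeomPoly_eval_tendsto ε₁ hε₁ x hx1).sub
            (rddfGeomPoly_eval_tendsto ε₂ hε₂ x hx1)
        have hlim : Tendsto (fun n => (g n).eval x * ((1-x) * (g n).eval x)) atTop
            (𝓝 (((1+ε₁-x)⁻¹ - (1+ε₂-x)⁻¹) * ((1-x) * ((1+ε₁-x)⁻¹ - (1+ε₂-x)⁻¹)))) :=
          hg.mul (tendsto_const_nhds.mul hg)
        rw [show ((1+ε₁-x)⁻¹ - (1+ε₂-x)⁻¹) * ((1-x) * ((1+ε₁-x)⁻¹ - (1+ε₂-x)⁻¹))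
          = (1-x) * ((1+ε₁-x)⁻¹ - (1+ε₂-x)⁻¹)^2 from by ring] at hlim
        exact hlim
    exact tendsto_nhds_unique hcont (hDCT.congr (fun n => (hform n).symm))
  -- integrable bound for the final dominated convergence
  have hbound_int : Integrable (fun x : ℝ => (1-x)⁻¹) μ := by
    constructor
    · exact ((measurable_const.sub measurable_id).inv).aestronglyMeasurable
    · rw [hasFiniteIntegral_def]
      apply lt_of_le_of_lt _ hfin
      apply lintegral_mono_ae
      filter_upwards [haeIcc, hae1] with x hx hx1
      have hlt : x < 1 := lt_of_le_of_ne hx.2 hx1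
      have h0 : (0:ℝ) < 1 - x := by linarith
      rw [Real.enorm_eq_ofReal (by positivity), ENNReal.ofReal_inv_of_pos h0]
  -- final dominated convergence along the product filter
  have hDCT2 : Tendsto
      (fun p : ℝ × ℝ => ∫ x, (1-x) * ((1+p.1-x)⁻¹ - (1+p.2-x)⁻¹)^2 ∂μ)
      ((𝓝[>] (0:ℝ)) ×ˢ (𝓝[>] (0:ℝ))) (𝓝 0) := by
    rw [show (𝓝 (0:ℝ)) = 𝓝 (∫ _, (0:ℝ) ∂μ) from by simp]
    apply tendsto_integral_filter_of_dominated_convergence (bound := fun x => (1-x)⁻¹)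
    · apply Eventually.of_forall
      intro p
      exact ((measurable_const.sub measurable_id).mul
        ((((measurable_const.sub measurable_id).inv).sub
          ((measurable_const.sub measurable_id).inv)).pow_const 2)).aestronglyMeasurable
    · filter_upwards [Filter.prod_mem_prod self_mem_nhdsWithin self_mem_nhdsWithin] with p hp
      filter_upwards [haeIcc, hae1] with x hx hx1
      have hlt : x < 1 := lt_of_le_of_ne hx.2 hx1
      rw [Real.norm_eq_abs, abs_of_nonneg (mul_nonneg (by linarith) (sq_nonneg _))]
      exact rddf_F_le_inv hlt hp.1 hp.2
    · exact hbound_int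
    · filter_upwards [haeIcc, hae1] with x hx hx1
      have hlt : x < 1 := lt_of_le_of_ne hx.2 hx1
      have hne : (1:ℝ) + 0 - x ≠ 0 := by
        intro h; rw [show (1:ℝ)+0-x = 1-x from by ring] at h; linarith
      have h1 : Tendsto (fun p : ℝ × ℝ => p.1) ((𝓝[>] (0:ℝ)) ×ˢ (𝓝[>] (0:ℝ))) (𝓝 0) :=
        tendsto_fst.mono_right nhdsWithin_le_nhds
      have h2 : Tendsto (fun p : ℝ × ℝ => p.2) ((𝓝[>] (0:ℝ)) ×ˢ (𝓝[>] (0:ℝ))) (𝓝 0) :=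
        tendsto_snd.mono_right nhdsWithin_le_nhds
      have hinv1 : Tendsto (fun p : ℝ × ℝ => (1+p.1-x)⁻¹)
          ((𝓝[>] (0:ℝ)) ×ˢ (𝓝[>] (0:ℝ))) (𝓝 ((1+0-x)⁻¹)) :=
        (((tendsto_const_nhds.add h1).sub tendsto_const_nhds).inv₀ hne)
      have hinv2 : Tendsto (fun p : ℝ × ℝ => (1+p.2-x)⁻¹)
          ((𝓝[>] (0:ℝ)) ×ˢ (𝓝[>] (0:ℝ))) (𝓝 ((1+0-x)⁻¹)) :=
        (((tendsto_const_nhds.add h2).sub tendsto_const_nhds).inv₀ hne)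
      have hlim : Tendsto (fun p : ℝ × ℝ => (1-x) * ((1+p.1-x)⁻¹ - (1+p.2-x)⁻¹)^2)
          ((𝓝[>] (0:ℝ)) ×ˢ (𝓝[>] (0:ℝ)))
          (𝓝 ((1-x) * (((1+0-x)⁻¹ - (1+0-x)⁻¹)^2))) :=
        tendsto_const_nhds.mul ((hinv1.sub hinv2).pow 2)
      simpa using hlim
  apply Tendsto.congr' _ hDCT2
  filter_upwards [Filter.prod_mem_prod self_mem_nhdsWithin self_mem_nhdsWithin] with p hp
  exact (key p.1 p.2 hp.1 hp.2).symm
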